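/- For every a > 0 and b ∈ (0,1), if μ is a Borel probability measure on [0,1] invariant under f_{a,b} (i.e., μ(f_{a,b}^{-1}(A)) = μ(A) for all Borel sets A) and μ({0,1}) = 0, then ∫_{[0,1]} x dμ(x) = b. -/

import Mathlib

open MeasureTheory Real Filter Set

/-- The map `f_{a,b}(x) = x / (x + (1-x) * exp (a (x - b)))`. -/
noncomputable def chaosMap (a b : ℝ) : ℝ → ℝ :=
  fun x => x / (x + (1 - x) * Real.exp (a * (x - b)))

/-- truncation -/
noncomputable def clamp (N : ℝ) (v : ℝ) : ℝ := max (min v N) (-N)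

lemma clamp_lip (N u v : ℝ) : |clamp N u - clamp N v| ≤ |u - v| := by
  unfold clamp
  refine (abs_max_sub_max_le_abs _ _ _).trans ?_
  have := abs_min_sub_min_le_max u N v N
  simpa using this

lemma clamp_abs_le (N v : ℝ) (hN : 0 ≤ N) : |clamp N v| ≤ N := by
  unfold clamp
  rw [abs_le]
  exact ⟨le_max_right _ _, max_le (min_le_right _ _) (by linarith)⟩

lemma clamp_eq (N v : ℝ) (h : |v| ≤ N) : clamp N v = v := by
  rw [abs_le] at h
  unfold clamp
  rw [min_eq_left h.2, max_eq_left h.1]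

lemma clamp_meas {h : ℝ → ℝ} (hm : Measurable h) (N : ℝ) :
    Measurable (fun x => clamp N (h x)) := by
  unfold clamp
  exact (hm.min measurable_const).max measurable_const

/-- the log-odds function -/
noncomputable def lodds (x : ℝ) : ℝ := Real.log x - Real.log (1 - x)

lemma lodds_meas : Measurable lodds :=
  Real.measurable_log.sub (Real.measurable_log.comp (measurable_const.sub measurable_id))

lemma key_identity (a b x : ℝ) (hx : x ∈ Set.Ioo (0:ℝ) 1) :
    lodds (chaosMap a b x) = lodds x - a * (x - b) := by
  obtain ⟨h0, h1⟩ := hx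
  set E := Real.exp (a * (x - b)) with hE
  have hEpos : 0 < E := Real.exp_pos _
  have hD : 0 < x + (1 - x) * E := by nlinarith
  have hF : chaosMap a b x = x / (x + (1 - x) * E) := rfl
  have h1F : 1 - chaosMap a b x = (1 - x) * E / (x + (1 - x) * E) := by
    rw [hF]; field_simp; ring
  unfold lodds
  have h1x : (0:ℝ) < 1 - x := by linarith
  rw [h1F, hF, Real.log_div h0.ne' hD.ne',
    Real.log_div (mul_pos h1x hEpos).ne' hD.ne',
    Real.log_mul h1x.ne' hEpos.ne', hE, Real.log_exp]
  ring

/-- For every `a > 0` and `b ∈ (0,1)`, if `μ` is a Borel probability measure on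
`[0,1]` invariant under `f_{a,b}` with `μ({0,1}) = 0`, then `∫ x dμ = b`. -/
theorem stmt_4 (a b : ℝ) (ha : 0 < a) (hb : b ∈ Set.Ioo (0 : ℝ) 1)
    (μ : MeasureTheory.Measure ℝ) [MeasureTheory.IsProbabilityMeasure μ]
    (hsupp : μ (Set.Icc (0 : ℝ) 1)ᶜ = 0)
    (hinv : ∀ A : Set ℝ, MeasurableSet A → μ (chaosMap a b ⁻¹' A) = μ A)
    (h01 : μ ({0, 1} : Set ℝ) = 0) :
    ∫ x in Set.Icc (0 : ℝ) 1, x ∂μ = b := by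
  have hFmeas : Measurable (chaosMap a b) := by
    unfold chaosMap; fun_prop
  -- a.e. x ∈ Ioo 0 1
  have hae : ∀ᵐ x ∂μ, x ∈ Set.Ioo (0:ℝ) 1 := by
    have hsub : (Set.Ioo (0:ℝ) 1)ᶜ ⊆ (Set.Icc (0:ℝ) 1)ᶜ ∪ ({0, 1} : Set ℝ) := by
      intro x hx
      by_cases h : x ∈ Set.Icc (0:ℝ) 1
      · right
        simp only [Set.mem_compl_iff, Set.mem_Ioo, not_and_or, not_lt] at hx
        obtain ⟨h0, h1⟩ := h
        simp only [Set.mem_insert_iff, Set.mem_singleton_iff]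
        rcases hx with h | h
        · exact Or.inl (by linarith)
        · exact Or.inr (by linarith)
      · left; exact h
    have hz : μ (Set.Ioo (0:ℝ) 1)ᶜ = 0 :=
      le_antisymm (le_trans (measure_mono hsub)
        (le_trans (measure_union_le _ _) (by rw [hsupp, h01]; simp))) zero_le
    exact (MeasureTheory.ae_iff.2 (by simpa [Set.compl_def] using hz))
  -- map measure
  have hmap : Measure.map (chaosMap a b) μ = μ := by
    ext A hA
    rw [Measure.map_apply hFmeas hA]
    exact hinv A hA
  -- truncated differences
  set φ : ℕ → ℝ → ℝ :=
    fun N x => clamp N (lodds (chaosMap a b x)) - clamp N (lodds x) with hφ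
  have hφmeas : ∀ N, Measurable (φ N) := fun N =>
    (clamp_meas (lodds_meas.comp hFmeas) _).sub (clamp_meas lodds_meas _)
  -- each φ N has integral 0
  have hint0 : ∀ N : ℕ, ∫ x, φ N x ∂μ = 0 := by
    intro N
    have hib : ∀ (h : ℝ → ℝ), Measurable h → (∀ x, |h x| ≤ (N:ℝ)) → Integrable h μ := by
      intro h hm hbd
      exact (integrable_const (N:ℝ)).mono' hm.aestronglyMeasurable
        (Filter.Eventually.of_forall (fun x => by simpa using hbd x))
    have hi1 : Integrable (fun x => clamp (N:ℝ) (lodds (chaosMap a b x))) μ :=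
      hib _ (clamp_meas (lodds_meas.comp hFmeas) _)
        (fun x => clamp_abs_le _ _ (Nat.cast_nonneg N))
    have hi2 : Integrable (fun x => clamp (N:ℝ) (lodds x)) μ :=
      hib _ (clamp_meas lodds_meas _) (fun x => clamp_abs_le _ _ (Nat.cast_nonneg N))
    have heq : ∫ x, clamp (N:ℝ) (lodds (chaosMap a b x)) ∂μ
        = ∫ x, clamp (N:ℝ) (lodds x) ∂μ := by
      conv_rhs => rw [← hmap]
      rw [integral_map hFmeas.aemeasurable (clamp_meas lodds_meas _).aestronglyMeasurable]
    simp only [hφ]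
    rw [integral_sub hi1 hi2, heq, sub_self]
  -- uniform a.e. bound
  have hbound : ∀ N : ℕ, ∀ᵐ x ∂μ, ‖φ N x‖ ≤ a * (max b (1 - b)) := by
    intro N
    filter_upwards [hae] with x hx
    have hid := key_identity a b x hx
    have hφx : φ N x = clamp (N:ℝ) (lodds x - a * (x - b)) - clamp (N:ℝ) (lodds x) := by
      simp only [hφ, hid]
    rw [hφx, Real.norm_eq_abs]
    refine (clamp_lip _ _ _).trans ?_
    rw [show lodds x - a * (x - b) - lodds x = -(a * (x - b)) by ring, abs_neg, abs_mul,
      abs_of_pos ha]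
    have hmb : |x - b| ≤ max b (1 - b) := by
      have hm1 : b ≤ max b (1 - b) := le_max_left _ _
      have hm2 : 1 - b ≤ max b (1 - b) := le_max_right _ _
      rw [abs_le]
      obtain ⟨h0, h1⟩ := hx
      constructor <;> linarith
    exact mul_le_mul_of_nonneg_left hmb ha.le
  -- pointwise limit
  have hlim : ∀ᵐ x ∂μ, Tendsto (fun N : ℕ => φ N x) atTop (nhds (-(a * (x - b)))) := by
    filter_upwards [hae] with x hx
    have hid := key_identity a b x hx
    have hev : ∀ᶠ N : ℕ in atTop, φ N x = -(a * (x - b)) := by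
      filter_upwards [eventually_ge_atTop (⌈|lodds x| + |a * (x - b)|⌉₊)] with N hN
      have hN' : |lodds x| + |a * (x - b)| ≤ (N : ℝ) :=
        (Nat.le_ceil _).trans (by exact_mod_cast hN)
      have h1 : clamp (N:ℝ) (lodds x) = lodds x :=
        clamp_eq _ _ (by have := abs_nonneg (a * (x - b)); linarith)
      have h2 : clamp (N:ℝ) (lodds (chaosMap a b x)) = lodds (chaosMap a b x) := by
        refine clamp_eq _ _ ?_
        rw [hid]
        calc |lodds x - a * (x - b)| ≤ |lodds x| + |a * (x - b)| := abs_sub _ _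
          _ ≤ (N:ℝ) := hN'
      simp only [hφ]
      rw [h2, h1, hid]
      ring
    exact Tendsto.congr' (hev.mono fun N h => h.symm) tendsto_const_nhds
  have hdct := MeasureTheory.tendsto_integral_of_dominated_convergence
    (bound := fun _ => a * max b (1 - b)) (fun N => (hφmeas N).aestronglyMeasurable)
    (integrable_const _) hbound hlim
  have hz : ∫ x, -(a * (x - b)) ∂μ = 0 := by
    have hc : Tendsto (fun N : ℕ => ∫ x, φ N x ∂μ) atTop (nhds 0) := by
      simp only [hint0]; exact tendsto_const_nhds
    exact tendsto_nhds_unique hdct hc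
  -- integrability of id
  have hxint : Integrable (fun x : ℝ => x) μ := by
    refine (integrable_const (1:ℝ)).mono' measurable_id.aestronglyMeasurable ?_
    filter_upwards [hae] with x hx
    rw [Real.norm_eq_abs, abs_le]
    exact ⟨by linarith [hx.1], hx.2.le⟩
  have hmean : ∫ x, x ∂μ = b := by
    have h1 : ∫ x, -(a * (x - b)) ∂μ = -(a * ((∫ x, x ∂μ) - b)) := by
      rw [integral_neg]
      congr 1
      rw [integral_const_mul]
      congr 1
      rw [integral_sub hxint (integrable_const b), integral_const]
      simp
    rw [h1] at hz
    nlinarith [hz]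
  -- convert to set integral
  have hres : μ.restrict (Set.Icc (0:ℝ) 1) = μ := by
    apply Measure.restrict_eq_self_of_ae_mem
    filter_upwards [hae] with x hx
    exact ⟨hx.1.le, hx.2.le⟩
  rw [hres, hmean]
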